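/- Let Φ : S_{m,n} → S_{m',n'} be an affine bijection between the separable state spaces. Let ω_1 ≠ ω_2 be pure states in K_m, σ_1 ≠ σ_2 pure states in K_n, ρ_1, ρ_2, ρ_3 pure states in K_{m'}, and τ_1, τ_2, τ_3 pure states in K_{n'}. Then the four equations Φ(ω_1⊗σ_1) = ρ_1⊗τ_1, Φ(ω_1⊗σ_2) = ρ_1⊗τ_2, Φ(ω_2⊗σ_1) = ρ_2⊗τ_3, Φ(ω_2⊗σ_2) = ρ_3⊗τ_3 cannot all hold simultaneously. -/

import Mathlib

set_option linter.unusedSectionVars false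
set_option linter.unusedVariables false
set_option maxHeartbeats 1000000

open scoped Kronecker ComplexOrder

noncomputable section

/-- The vector state (rank-one projection onto `ℂx`) associated to a unit vector `x`. -/
def vecState {ι : Type*} [Fintype ι] (x : EuclideanSpace ℂ ι) : Matrix ι ι ℂ :=
  Matrix.of fun i j => x i * (starRingEnd ℂ) (x j)

/-- The state space of `B(ℂ^ι)`: density matrices. -/
def stateSet (ι : Type*) [Fintype ι] [DecidableEq ι] : Set (Matrix ι ι ℂ) :=
  {ρ | ρ.PosSemidef ∧ ρ.trace = 1}

/-- A pure state: rank-one projection onto the line spanned by a unit vector. -/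
def IsPureState {ι : Type*} [Fintype ι] (ρ : Matrix ι ι ℂ) : Prop :=
  ∃ x : EuclideanSpace ℂ ι, ‖x‖ = 1 ∧ ρ = vecState x

/-- The set of separable states on `B(ℂᵐ ⊗ ℂⁿ)`: convex combinations of product states. -/
def sepSet (m n : ℕ) : Set (Matrix (Fin m × Fin n) (Fin m × Fin n) ℂ) :=
  {ρ | ∃ (r : ℕ) (lam : Fin r → ℝ) (σ : Fin r → Matrix (Fin m) (Fin m) ℂ)
        (τ : Fin r → Matrix (Fin n) (Fin n) ℂ),
      (∀ i, 0 ≤ lam i) ∧ (∑ i, lam i) = 1 ∧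
      (∀ i, σ i ∈ stateSet (Fin m)) ∧ (∀ i, τ i ∈ stateSet (Fin n)) ∧
      ρ = ∑ i, lam i • (σ i ⊗ₖ τ i)}

/-- `Φ` maps `A` bijectively onto `B` and is affine on `A`. -/
def AffBijOn {E F' : Type*} [AddCommGroup E] [Module ℝ E] [AddCommGroup F'] [Module ℝ F']
    (Φ : E → F') (A : Set E) (B : Set F') : Prop :=
  Set.BijOn Φ A B ∧
    ∀ x ∈ A, ∀ y ∈ A, ∀ t : ℝ, 0 ≤ t → t ≤ 1 →
      Φ (t • x + (1 - t) • y) = t • Φ x + (1 - t) • Φ y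


namespace FourEqAux
open Matrix Complex
variable {ι κ : Type*} [Fintype ι] [Fintype κ] [DecidableEq ι] [DecidableEq κ]
local notation "conj'" => starRingEnd ℂ

def vecState (x : ι → ℂ) : Matrix ι ι ℂ :=
  Matrix.of fun i j => x i * (starRingEnd ℂ) (x j)


lemma star_dot_comm (a b : ι → ℂ) : star a ⬝ᵥ b = conj' (star b ⬝ᵥ a) := by
  rw [dotProduct, dotProduct, _root_.map_sum]
  refine Finset.sum_congr rfl fun i _ => ?_
  simp only [Pi.star_apply, Complex.star_def, _root_.map_mul, Complex.conj_conj]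
  ring

lemma star_dot_self (a : ι → ℂ) : star a ⬝ᵥ a = ((∑ i, Complex.normSq (a i) : ℝ) : ℂ) := by
  push_cast
  refine Finset.sum_congr rfl fun i _ => ?_
  simp [Complex.normSq_eq_conj_mul_self]

lemma star_dot_self_nonneg (a : ι → ℂ) : 0 ≤ star a ⬝ᵥ a := by
  rw [star_dot_self, Complex.zero_le_real]
  exact Finset.sum_nonneg fun i _ => Complex.normSq_nonneg _

lemma eq_zero_of_star_dot_self (a : ι → ℂ) (h : star a ⬝ᵥ a = 0) : a = 0 := by
  rw [star_dot_self] at h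
  norm_cast at h
  have h2 : ∀ i ∈ Finset.univ, Complex.normSq (a i) = 0 := by
    rw [← Finset.sum_eq_zero_iff_of_nonneg (fun i _ => Complex.normSq_nonneg _)]
    exact h
  funext i
  exact Complex.normSq_eq_zero.mp (h2 i (Finset.mem_univ i))

lemma norm_sq_sum (x : EuclideanSpace ℂ ι) : (∑ i, Complex.normSq (x i)) = ‖x‖ ^ 2 := by
  rw [EuclideanSpace.norm_eq, Real.sq_sqrt (by positivity)]
  exact Finset.sum_congr rfl fun i _ => by rw [Complex.normSq_eq_norm_sq]

lemma norm_one_iff_dot (x : EuclideanSpace ℂ ι) : ‖x‖ = 1 ↔ star (x : ι → ℂ) ⬝ᵥ x = 1 := by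
  rw [star_dot_self,
    show ((∑ i, Complex.normSq (x i) : ℝ) : ℂ) = 1 ↔ (∑ i, Complex.normSq (x i) : ℝ) = 1 by
      exact_mod_cast Iff.rfl,
    norm_sq_sum]
  constructor
  · intro h; rw [h]; norm_num
  · intro h
    have h1 : (‖x‖ - 1) * (‖x‖ + 1) = 0 := by linear_combination h
    rcases mul_eq_zero.mp h1 with h2 | h2
    · linarith
    · linarith [norm_nonneg x]

lemma vecState_mulVec (x : ι → ℂ) (y : ι → ℂ) :
    vecState x *ᵥ y = (star x ⬝ᵥ y) • x := by
  funext i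
  simp only [Matrix.mulVec, dotProduct, vecState, Matrix.of_apply, Pi.smul_apply,
    smul_eq_mul, Pi.star_apply, Finset.mul_sum]
  rw [Finset.sum_mul]
  refine Finset.sum_congr rfl fun j _ => ?_
  simp only [Complex.star_def]
  ring

lemma vecState_posSemidef (x : ι → ℂ) : (vecState x).PosSemidef := by
  refine Matrix.PosSemidef.of_dotProduct_mulVec_nonneg ?_ ?_
  · ext i j
    simp [vecState, Matrix.conjTranspose_apply, mul_comm]
  · intro y
    rw [vecState_mulVec, dotProduct_smul, smul_eq_mul, star_dot_comm y x,
      Complex.mul_conj, Complex.zero_le_real]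
    exact Complex.normSq_nonneg _

lemma vecState_trace (x : ι → ℂ) [DecidableEq ι] : (vecState x).trace = star x ⬝ᵥ x := by
  simp only [Matrix.trace, Matrix.diag, vecState, Matrix.of_apply, dotProduct,
    Pi.star_apply]
  refine Finset.sum_congr rfl fun i _ => ?_
  simp only [Complex.star_def]
  ring

lemma vecState_smul (c : ℂ) (x : ι → ℂ) :
    vecState (c • x) = Complex.normSq c • vecState x := by
  ext i j
  simp only [vecState, Matrix.of_apply, Pi.smul_apply, smul_eq_mul, _root_.map_mul,
    Matrix.smul_apply]
  rw [Complex.real_smul, Complex.normSq_eq_conj_mul_self]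
  ring

/-- Extract proportionality from equality of vector states. -/
lemma vecState_inj (a g : ι → ℂ) (hg : g ≠ 0) (h : vecState a = vecState g) :
    ∃ k : ℂ, a = k • g := by
  obtain ⟨i₀, hi₀⟩ : ∃ i₀, g i₀ ≠ 0 := by
    by_contra hc
    push_neg at hc
    exact hg (funext hc)
  have h0 : a i₀ * conj' (a i₀) = g i₀ * conj' (g i₀) := congrFun (congrFun h i₀) i₀
  have ha0 : a i₀ ≠ 0 := by
    intro hz
    rw [hz, zero_mul] at h0
    rw [Complex.mul_conj] at h0
    norm_cast at h0
    exact hi₀ (Complex.normSq_eq_zero.mp h0.symm)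
  have hca : conj' (a i₀) ≠ 0 := by simpa using ha0
  refine ⟨a i₀ / g i₀, funext fun i => ?_⟩
  have hi : a i * conj' (a i₀) = g i * conj' (g i₀) := congrFun (congrFun h i) i₀
  rw [Pi.smul_apply, smul_eq_mul]
  have h2 : a i * (g i₀ * conj' (a i₀)) = (a i₀ / g i₀) * g i * (g i₀ * conj' (a i₀)) := by
    have e1 : a i * (g i₀ * conj' (a i₀)) = (a i * conj' (a i₀)) * g i₀ := by ring
    have e2 : (a i₀ / g i₀) * g i * (g i₀ * conj' (a i₀)) = g i * (a i₀ * conj' (a i₀)) := by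
      field_simp
    rw [e1, hi, e2, h0]
    ring
  exact mul_right_cancel₀ (mul_ne_zero hi₀ hca) h2

/-- A unit vector proportional to `g` has the same vector state as `g`. -/
lemma vecState_eq_of_smul {a g : ι → ℂ} {k : ℂ} (ha : star a ⬝ᵥ a = 1)
    (hg : star g ⬝ᵥ g = 1) (hk : a = k • g) : vecState a = vecState g := by
  subst hk
  rw [vecState_smul]
  have h1 : star (k • g) ⬝ᵥ (k • g) = conj' k * k * (star g ⬝ᵥ g) := by
    rw [star_smul, smul_dotProduct, dotProduct_smul, smul_eq_mul, smul_eq_mul,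
      Complex.star_def]
    ring
  rw [hg, mul_one] at h1
  rw [ha] at h1
  have h2 : (Complex.normSq k : ℂ) = 1 := by rw [Complex.normSq_eq_conj_mul_self, ← h1]
  have : Complex.normSq k = 1 := by exact_mod_cast h2
  rw [this, one_smul]

/-- Dual vector: if `vecState u₁ ≠ vecState u₂` (units), there is `x` orthogonal to `u₂`
but not to `u₁`. -/
lemma exists_dual {u₁ u₂ : ι → ℂ} (h₁ : star u₁ ⬝ᵥ u₁ = 1) (h₂ : star u₂ ⬝ᵥ u₂ = 1)
    (hne : vecState u₁ ≠ vecState u₂) :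
    ∃ x : ι → ℂ, star u₂ ⬝ᵥ x = 0 ∧ star u₁ ⬝ᵥ x ≠ 0 := by
  set c := star u₂ ⬝ᵥ u₁ with hc
  have horth : star u₂ ⬝ᵥ (u₁ - c • u₂) = 0 := by
    simp only [dotProduct_sub, dotProduct_smul, smul_eq_mul, h₂, mul_one, ← hc,
      sub_self]
  refine ⟨u₁ - c • u₂, horth, ?_⟩
  intro hx
  apply hne
  have hxx : star (u₁ - c • u₂) ⬝ᵥ (u₁ - c • u₂) = 0 := by
    have e1 : star (u₁ - c • u₂) ⬝ᵥ (u₁ - c • u₂)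
        = star u₁ ⬝ᵥ (u₁ - c • u₂) - conj' c * (star u₂ ⬝ᵥ (u₁ - c • u₂)) := by
      rw [star_sub, star_smul, sub_dotProduct, smul_dotProduct, smul_eq_mul,
        Complex.star_def]
    rw [e1, hx, horth]
    ring
  have hz := eq_zero_of_star_dot_self _ hxx
  exact vecState_eq_of_smul h₁ h₂ (sub_eq_zero.mp hz)


/-- Product (tensor) vector. -/
def tvec (a : ι → ℂ) (b : κ → ℂ) : ι × κ → ℂ := fun p => a p.1 * b p.2

lemma tvec_smul_left (c : ℂ) (a : ι → ℂ) (b : κ → ℂ) : tvec (c • a) b = c • tvec a b := by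
  funext p; simp [tvec]; ring

lemma tvec_smul_right (c : ℂ) (a : ι → ℂ) (b : κ → ℂ) : tvec a (c • b) = c • tvec a b := by
  funext p; simp [tvec]; ring

lemma tvec_ne_zero {a : ι → ℂ} {b : κ → ℂ} (ha : a ≠ 0) (hb : b ≠ 0) : tvec a b ≠ 0 := by
  obtain ⟨i, hi⟩ : ∃ i, a i ≠ 0 := by
    by_contra h; push_neg at h; exact ha (funext h)
  obtain ⟨j, hj⟩ : ∃ j, b j ≠ 0 := by
    by_contra h; push_neg at h; exact hb (funext h)
  intro h
  exact (mul_ne_zero hi hj) (congrFun h (i, j))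

/-- Second-index contraction. -/
def ctr2 (M : ι × κ → ℂ) (h : κ → ℂ) : ι → ℂ := fun i => ∑ j, M (i, j) * h j

/-- First-index contraction. -/
def ctr1 (M : ι × κ → ℂ) (h : ι → ℂ) : κ → ℂ := fun j => ∑ i, M (i, j) * h i

lemma ctr2_tvec (a : ι → ℂ) (b : κ → ℂ) (h : κ → ℂ) :
    ctr2 (tvec a b) h = (b ⬝ᵥ h) • a := by
  funext i
  simp only [ctr2, tvec, Pi.smul_apply, smul_eq_mul, dotProduct, Finset.sum_mul]
  exact Finset.sum_congr rfl fun j _ => by ring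

lemma ctr1_tvec (a : ι → ℂ) (b : κ → ℂ) (h : ι → ℂ) :
    ctr1 (tvec a b) h = (a ⬝ᵥ h) • b := by
  funext j
  simp only [ctr1, tvec, Pi.smul_apply, smul_eq_mul, dotProduct, Finset.sum_mul]
  exact Finset.sum_congr rfl fun i _ => by ring

lemma ctr2_add (M N : ι × κ → ℂ) (h : κ → ℂ) : ctr2 (M + N) h = ctr2 M h + ctr2 N h := by
  funext i
  simp only [ctr2, Pi.add_apply, add_mul, Finset.sum_add_distrib]

lemma ctr2_smul (c : ℂ) (M : ι × κ → ℂ) (h : κ → ℂ) : ctr2 (c • M) h = c • ctr2 M h := by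
  funext i
  simp only [ctr2, Pi.smul_apply, smul_eq_mul, Finset.mul_sum]
  exact Finset.sum_congr rfl fun j _ => by ring

lemma ctr1_add (M N : ι × κ → ℂ) (h : ι → ℂ) : ctr1 (M + N) h = ctr1 M h + ctr1 N h := by
  funext j
  simp only [ctr1, Pi.add_apply, add_mul, Finset.sum_add_distrib]

lemma ctr1_smul (c : ℂ) (M : ι × κ → ℂ) (h : ι → ℂ) : ctr1 (c • M) h = c • ctr1 M h := by
  funext j
  simp only [ctr1, Pi.smul_apply, smul_eq_mul, Finset.mul_sum]
  exact Finset.sum_congr rfl fun i _ => by ring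

lemma dot_star_eq_conj (a x : κ → ℂ) : a ⬝ᵥ star x = conj' (star a ⬝ᵥ x) := by
  rw [dotProduct, dotProduct, _root_.map_sum]
  refine Finset.sum_congr rfl fun j _ => ?_
  simp only [Pi.star_apply, Complex.star_def, _root_.map_mul, Complex.conj_conj]

/-- From a dual vector for the starred pairing, get one for the plain pairing. -/
lemma dual_plain {v v' : κ → ℂ} (x : κ → ℂ) (h0 : star v' ⬝ᵥ x = 0) (h1 : star v ⬝ᵥ x ≠ 0) :
    v' ⬝ᵥ star x = 0 ∧ v ⬝ᵥ star x ≠ 0 := by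
  constructor
  · rw [dot_star_eq_conj, h0, map_zero]
  · rw [dot_star_eq_conj]
    simpa using h1

/-- Decompose a product-vector equality: `tvec a b = c • tvec u v` with everything nonzero. -/
lemma tvec_factor {a u : ι → ℂ} {b v : κ → ℂ} {c : ℂ} (hc : c ≠ 0) (hu : u ≠ 0) (hv : v ≠ 0)
    (h : tvec a b = c • tvec u v) :
    (∃ d : ℂ, d ≠ 0 ∧ a = d • u) ∧ (∃ e : ℂ, e ≠ 0 ∧ b = e • v) := by
  obtain ⟨i₀, hi₀⟩ : ∃ i, u i ≠ 0 := by
    by_contra hx; push_neg at hx; exact hu (funext hx)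
  obtain ⟨j₀, hj₀⟩ : ∃ j, v j ≠ 0 := by
    by_contra hx; push_neg at hx; exact hv (funext hx)
  have hab : ∀ i j, a i * b j = c * (u i * v j) := fun i j => by
    have := congrFun h (i, j)
    simpa [tvec] using this
  have hb0 : b j₀ ≠ 0 := by
    intro hz
    have : ∀ i, a i * b j₀ = c * (u i * v j₀) := fun i => hab i j₀
    have h2 := this i₀
    rw [hz, mul_zero] at h2
    exact (mul_ne_zero hc (mul_ne_zero hi₀ hj₀)) h2.symm
  have ha0 : a i₀ ≠ 0 := by
    intro hz
    have h2 := hab i₀ j₀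
    rw [hz, zero_mul] at h2
    exact (mul_ne_zero hc (mul_ne_zero hi₀ hj₀)) h2.symm
  constructor
  · refine ⟨c * v j₀ / b j₀, ?_, funext fun i => ?_⟩
    · exact div_ne_zero (mul_ne_zero hc hj₀) hb0
    · have h2 := hab i j₀
      rw [Pi.smul_apply, smul_eq_mul]
      field_simp
      linear_combination h2
  · refine ⟨c * u i₀ / a i₀, ?_, funext fun j => ?_⟩
    · exact div_ne_zero (mul_ne_zero hc hi₀) ha0
    · have h2 := hab i₀ j
      rw [Pi.smul_apply, smul_eq_mul]
      field_simp
      linear_combination h2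


/-- A product vector lying in the span of two "independent" product vectors is
proportional to one of them. -/
lemma prod_span {u u' : ι → ℂ} {v v' : κ → ℂ} {a : ι → ℂ} {b : κ → ℂ} {α β : ℂ}
    (hu : u ≠ 0) (hv : v ≠ 0)
    (xu : ι → ℂ) (hxu0 : star u' ⬝ᵥ xu = 0) (hxu1 : star u ⬝ᵥ xu ≠ 0)
    (xv : κ → ℂ) (hxv0 : star v' ⬝ᵥ xv = 0) (hxv1 : star v ⬝ᵥ xv ≠ 0)
    (h : tvec a b = α • tvec u v + β • tvec u' v') :
    (∃ c : ℂ, tvec a b = c • tvec u v) ∨ (∃ c : ℂ, tvec a b = c • tvec u' v') := by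
  by_cases hα : α = 0
  · right
    exact ⟨β, by rw [h, hα, zero_smul, zero_add]⟩
  left
  obtain ⟨hv'0, hv1⟩ := dual_plain xv hxv0 hxv1
  obtain ⟨hu'0, hu1⟩ := dual_plain xu hxu0 hxu1
  set c : ℂ := v ⬝ᵥ star xv with hcdef
  have hc : c ≠ 0 := hv1
  have hctr2 : (b ⬝ᵥ star xv) • a = (α * c) • u := by
    have := congrArg (fun M => ctr2 M (star xv)) h
    simp only [ctr2_add, ctr2_smul, ctr2_tvec] at this
    rw [this, hv'0, ← hcdef]
    funext i
    simp only [Pi.add_apply, Pi.smul_apply, smul_eq_mul]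
    ring
  have hd : b ⬝ᵥ star xv ≠ 0 := by
    intro hz
    rw [hz, zero_smul] at hctr2
    rcases smul_eq_zero.mp hctr2.symm with h' | h'
    · exact (mul_ne_zero hα hc) h'
    · exact hu h'
  set d : ℂ := b ⬝ᵥ star xv with hddef
  have ha : a = (α * c / d) • u := by
    funext i
    have := congrFun hctr2 i
    simp only [Pi.smul_apply, smul_eq_mul] at this ⊢
    field_simp
    linear_combination this
  -- now contract the first index
  set c₁ : ℂ := u ⬝ᵥ star xu with hc1def
  have hc₁ : c₁ ≠ 0 := hu1
  have hctr1 : (a ⬝ᵥ star xu) • b = (α * c₁) • v := by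
    have := congrArg (fun M => ctr1 M (star xu)) h
    simp only [ctr1_add, ctr1_smul, ctr1_tvec] at this
    rw [this, hu'0, ← hc1def]
    funext j
    simp only [Pi.add_apply, Pi.smul_apply, smul_eq_mul]
    ring
  have hadot : a ⬝ᵥ star xu = (α * c / d) * c₁ := by
    rw [ha, smul_dotProduct, smul_eq_mul, ← hc1def]
  have he : (α * c / d) * c₁ ≠ 0 :=
    mul_ne_zero (div_ne_zero (mul_ne_zero hα hc) hd) hc₁
  have hb : b = (α * c₁ / ((α * c / d) * c₁)) • v := by
    funext j
    have := congrFun hctr1 j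
    rw [hadot] at this
    simp only [Pi.smul_apply, smul_eq_mul] at this ⊢
    field_simp
    field_simp at this
    linear_combination this
  refine ⟨(α * c / d) * (α * c₁ / ((α * c / d) * c₁)), ?_⟩
  rw [ha, hb, tvec_smul_left, tvec_smul_right, smul_smul]

/-- Orthogonal decomposition against the pair `w, w'` (Gram–Schmidt). -/
lemma decomp_two {w w' : ι → ℂ} (hw : star w ⬝ᵥ w = 1) (z : ι → ℂ) :
    ∃ (α β : ℂ) (x : ι → ℂ), z = α • w + β • w' + x ∧
      star w ⬝ᵥ x = 0 ∧ star w' ⬝ᵥ x = 0 := by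
  classical
  set c : ℂ := star w ⬝ᵥ w' with hcdef
  set w₂ : ι → ℂ := w' - c • w with hw2def
  have hww2 : star w ⬝ᵥ w₂ = 0 := by
    rw [hw2def, dotProduct_sub, dotProduct_smul, smul_eq_mul, hw, mul_one, ← hcdef,
      sub_self]
  have hw2w : star w₂ ⬝ᵥ w = 0 := by
    rw [star_dot_comm, hww2, map_zero]
  set c₂ : ℂ := star w₂ ⬝ᵥ w₂ with hc2def
  set γ : ℂ := if c₂ = 0 then 0 else (star w₂ ⬝ᵥ z) / c₂ with hγdef
  set x : ι → ℂ := z - (star w ⬝ᵥ z) • w - γ • w₂ with hxdef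
  have hx1 : star w ⬝ᵥ x = 0 := by
    rw [hxdef, dotProduct_sub, dotProduct_sub, dotProduct_smul,
      dotProduct_smul, smul_eq_mul, smul_eq_mul, hw, mul_one, hww2, mul_zero, sub_zero,
      sub_self]
  have hx2' : star w₂ ⬝ᵥ x = 0 := by
    rw [hxdef, dotProduct_sub, dotProduct_sub, dotProduct_smul,
      dotProduct_smul, smul_eq_mul, smul_eq_mul, hw2w, mul_zero, sub_zero, ← hc2def]
    by_cases h0 : c₂ = 0
    · have : w₂ = 0 := eq_zero_of_star_dot_self _ (hc2def ▸ h0)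
      rw [hγdef, if_pos h0, zero_mul, sub_zero, this]
      simp
    · rw [hγdef, if_neg h0]
      field_simp
      ring
  have hx2 : star w' ⬝ᵥ x = 0 := by
    have hw' : w' = w₂ + c • w := by rw [hw2def]; abel
    rw [hw', star_add, star_smul, add_dotProduct, smul_dotProduct, hx2', hx1,
      zero_add, smul_eq_mul, mul_zero]
  refine ⟨star w ⬝ᵥ z - γ * c, γ, x, ?_, hx1, hx2⟩
  rw [hxdef, hw2def]
  funext i
  simp only [Pi.add_apply, Pi.sub_apply, Pi.smul_apply, smul_eq_mul]
  ring

/-- Range of a hermitian matrix vanishing on the orthocomplement of `{w, w'}`. -/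
lemma herm_range {M : Matrix ι ι ℂ} (hM : M.IsHermitian) {w w' : ι → ℂ}
    (hw : star w ⬝ᵥ w = 1)
    (hker : ∀ x, star w ⬝ᵥ x = 0 → star w' ⬝ᵥ x = 0 → M *ᵥ x = 0) (y : ι → ℂ) :
    ∃ α β : ℂ, M *ᵥ y = α • w + β • w' := by
  obtain ⟨α, β, x, hdec, hx1, hx2⟩ := decomp_two hw (M *ᵥ y)
  suffices hx : x = 0 by exact ⟨α, β, by rw [hdec, hx, add_zero]⟩
  apply eq_zero_of_star_dot_self
  have hxw : star x ⬝ᵥ w = 0 := by rw [star_dot_comm, hx1, map_zero]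
  have hxw' : star x ⬝ᵥ w' = 0 := by rw [star_dot_comm, hx2, map_zero]
  have hMx : M *ᵥ x = 0 := hker x hx1 hx2
  have h1 : star x ⬝ᵥ (M *ᵥ y) = 0 := by
    rw [Matrix.dotProduct_mulVec]
    have h2 : star x ᵥ* M = star (M *ᵥ x) := by
      conv_lhs => rw [← hM]
      rw [← Matrix.star_mulVec]
    rw [h2, hMx]
    simp
  have h3 : star x ⬝ᵥ (M *ᵥ y) = α * (star x ⬝ᵥ w) + β * (star x ⬝ᵥ w') + star x ⬝ᵥ x := by
    rw [hdec, dotProduct_add, dotProduct_add, dotProduct_smul,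
      dotProduct_smul, smul_eq_mul, smul_eq_mul]
  rw [h1, hxw, hxw'] at h3
  linear_combination -h3

lemma unit_ne_zero {u : ι → ℂ} (hu : star u ⬝ᵥ u = 1) : u ≠ 0 := by
  intro h
  rw [h] at hu
  simp [dotProduct] at hu

lemma exists_diag_ne_zero {A : Matrix ι ι ℂ} (htr : A.trace = 1) : ∃ i, A i i ≠ 0 := by
  by_contra h
  push_neg at h
  have : A.trace = 0 := by
    simp only [Matrix.trace, Matrix.diag]
    exact Finset.sum_eq_zero fun i _ => h i
  rw [htr] at this
  exact one_ne_zero this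

/-- A hermitian trace-one matrix all of whose columns are multiples of the unit vector `u`
equals `vecState u`. -/
lemma col_structure {A : Matrix ι ι ℂ} (hA : A.IsHermitian) (htr : A.trace = 1)
    {u : ι → ℂ} (hu : star u ⬝ᵥ u = 1)
    (hcols : ∀ a : ι → ℂ, ∃ k : ℂ, A *ᵥ a = k • u) : A = vecState u := by
  obtain ⟨i₀, hi₀⟩ : ∃ i, u i ≠ 0 := by
    by_contra h
    push_neg at h
    exact unit_ne_zero hu (funext h)
  choose k hk using fun j : ι => hcols (Pi.single j 1)
  have hAij : ∀ i j, A i j = k j * u i := by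
    intro i j
    have h1 := congrFun (hk j) i
    rw [Matrix.mulVec_single] at h1
    simpa [mul_comm] using h1
  have hsym : ∀ i j, k j * u i = conj' (k i) * conj' (u j) := by
    intro i j
    have h1 : Aᴴ i j = A i j := congrFun (congrFun hA i) j
    rw [Matrix.conjTranspose_apply, hAij, hAij, Complex.star_def, _root_.map_mul] at h1
    rw [h1]
  set t : ℂ := conj' (k i₀) / u i₀ with htdef
  have hkj : ∀ j, k j = conj' (u j) * t := by
    intro j
    have h1 := hsym i₀ j
    rw [htdef]
    field_simp
    linear_combination h1
  have hsum : A.trace = t * (star u ⬝ᵥ u) := by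
    simp only [Matrix.trace, Matrix.diag, dotProduct, Pi.star_apply, Complex.star_def,
      Finset.mul_sum]
    refine Finset.sum_congr rfl fun j _ => ?_
    rw [hAij, hkj]
    ring
  rw [htr, hu, mul_one] at hsum
  ext i j
  rw [hAij, hkj, ← hsum, vecState]
  simp only [Matrix.of_apply]
  ring

/-- Core of the rigidity argument. -/
lemma rigidity_core {A : Matrix ι ι ℂ} {B : Matrix κ κ ℂ}
    (hA : A.IsHermitian) (hAtr : A.trace = 1) (hB : B.IsHermitian) (hBtr : B.trace = 1)
    {u u' : ι → ℂ} {v v' : κ → ℂ}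
    (hu0 : u ≠ 0) (hu'0 : u' ≠ 0) (hv0 : v ≠ 0) (hv'0 : v' ≠ 0)
    (hu : star u ⬝ᵥ u = 1) (hv : star v ⬝ᵥ v = 1)
    (xu : ι → ℂ) (hxu0 : star u' ⬝ᵥ xu = 0) (hxu1 : star u ⬝ᵥ xu ≠ 0)
    (xv : κ → ℂ) (hxv0 : star v' ⬝ᵥ xv = 0) (hxv1 : star v ⬝ᵥ xv ≠ 0)
    (H : ∀ a b, ∃ α β : ℂ, tvec (A *ᵥ a) (B *ᵥ b) = α • tvec u v + β • tvec u' v')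
    {i₀ : ι} {j₀ : κ} (hi₀ : A i₀ i₀ ≠ 0) (hj₀ : B j₀ j₀ ≠ 0)
    (hcase : ∃ c : ℂ, tvec (A *ᵥ Pi.single i₀ 1) (B *ᵥ Pi.single j₀ 1) = c • tvec u v) :
    A = vecState u ∧ B = vecState v := by
  set ah : ι → ℂ := A *ᵥ Pi.single i₀ 1 with hahdef
  set bh : κ → ℂ := B *ᵥ Pi.single j₀ 1 with hbhdef
  have hah0 : ah ≠ 0 := by
    intro h
    have := congrFun h i₀
    rw [hahdef, Matrix.mulVec_single] at this
    simp at this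
    exact hi₀ this
  have hbh0 : bh ≠ 0 := by
    intro h
    have := congrFun h j₀
    rw [hbhdef, Matrix.mulVec_single] at this
    simp at this
    exact hj₀ this
  obtain ⟨c, hc⟩ := hcase
  have hcne : c ≠ 0 := by
    intro h
    rw [h, zero_smul] at hc
    exact tvec_ne_zero hah0 hbh0 hc
  obtain ⟨⟨d, hd, had⟩, ⟨e, he, hbe⟩⟩ := tvec_factor hcne hu0 hv0 hc
  -- all columns of A are multiples of u
  have hcolsA : ∀ a : ι → ℂ, ∃ kk : ℂ, A *ᵥ a = kk • u := by
    intro a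
    by_cases hz : A *ᵥ a = 0
    · exact ⟨0, by rw [hz, zero_smul]⟩
    obtain ⟨α, β, hαβ⟩ := H a (Pi.single j₀ 1)
    rcases prod_span hu0 hv0 xu hxu0 hxu1 xv hxv0 hxv1 hαβ with ⟨c', hc'⟩ | ⟨c', hc'⟩
    · have hc'ne : c' ≠ 0 := by
        intro h
        rw [h, zero_smul] at hc'
        exact tvec_ne_zero hz hbh0 hc'
      obtain ⟨⟨d', hd', had'⟩, _⟩ := tvec_factor hc'ne hu0 hv0 hc'
      exact ⟨d', had'⟩
    · exfalso
      have hc'ne : c' ≠ 0 := by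
        intro h
        rw [h, zero_smul] at hc'
        exact tvec_ne_zero hz hbh0 hc'
      obtain ⟨_, ⟨e', he', hbe'⟩⟩ := tvec_factor hc'ne hu'0 hv'0 hc'
      -- bh = e • v and bh = e' • v' force v ∝ v', contradicting the dual vector
      have hvv : v = (e⁻¹ * e') • v' := by
        have h1 : e • v = e' • v' := by rw [← hbe, ← hbe']
        funext j
        have := congrFun h1 j
        simp only [Pi.smul_apply, smul_eq_mul] at this ⊢
        field_simp
        linear_combination this
      apply hxv1
      rw [hvv, star_smul, smul_dotProduct, hxv0, smul_zero]
  -- all columns of B are multiples of v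
  have hcolsB : ∀ b : κ → ℂ, ∃ kk : ℂ, B *ᵥ b = kk • v := by
    intro b
    by_cases hz : B *ᵥ b = 0
    · exact ⟨0, by rw [hz, zero_smul]⟩
    obtain ⟨α, β, hαβ⟩ := H (Pi.single i₀ 1) b
    rcases prod_span hu0 hv0 xu hxu0 hxu1 xv hxv0 hxv1 hαβ with ⟨c', hc'⟩ | ⟨c', hc'⟩
    · have hc'ne : c' ≠ 0 := by
        intro h
        rw [h, zero_smul] at hc'
        exact tvec_ne_zero hah0 hz hc'
      obtain ⟨_, ⟨e', he', hbe'⟩⟩ := tvec_factor hc'ne hu0 hv0 hc'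
      exact ⟨e', hbe'⟩
    · exfalso
      have hc'ne : c' ≠ 0 := by
        intro h
        rw [h, zero_smul] at hc'
        exact tvec_ne_zero hah0 hz hc'
      obtain ⟨⟨d', hd', had'⟩, _⟩ := tvec_factor hc'ne hu'0 hv'0 hc'
      have huu : u = (d⁻¹ * d') • u' := by
        have h1 : d • u = d' • u' := by rw [← had, ← had']
        funext i
        have := congrFun h1 i
        simp only [Pi.smul_apply, smul_eq_mul] at this ⊢
        field_simp
        linear_combination this
      apply hxu1
      rw [huu, star_smul, smul_dotProduct, hxu0, smul_zero]
  exact ⟨col_structure hA hAtr hu hcolsA, col_structure hB hBtr hv hcolsB⟩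

/-- Rigidity: a product state whose range lies in the span of two independent pure product
vectors is one of the two pure product states. -/
lemma rigidity {A : Matrix ι ι ℂ} {B : Matrix κ κ ℂ}
    (hA : A.IsHermitian) (hAtr : A.trace = 1) (hB : B.IsHermitian) (hBtr : B.trace = 1)
    {u u' : ι → ℂ} {v v' : κ → ℂ}
    (hu : star u ⬝ᵥ u = 1) (hu' : star u' ⬝ᵥ u' = 1)
    (hv : star v ⬝ᵥ v = 1) (hv' : star v' ⬝ᵥ v' = 1)
    (xu : ι → ℂ) (hxu0 : star u' ⬝ᵥ xu = 0) (hxu1 : star u ⬝ᵥ xu ≠ 0)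
    (xu' : ι → ℂ) (hxu'0 : star u ⬝ᵥ xu' = 0) (hxu'1 : star u' ⬝ᵥ xu' ≠ 0)
    (xv : κ → ℂ) (hxv0 : star v' ⬝ᵥ xv = 0) (hxv1 : star v ⬝ᵥ xv ≠ 0)
    (xv' : κ → ℂ) (hxv'0 : star v ⬝ᵥ xv' = 0) (hxv'1 : star v' ⬝ᵥ xv' ≠ 0)
    (H : ∀ a b, ∃ α β : ℂ, tvec (A *ᵥ a) (B *ᵥ b) = α • tvec u v + β • tvec u' v') :
    (A = vecState u ∧ B = vecState v) ∨ (A = vecState u' ∧ B = vecState v') := by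
  have hu0 : u ≠ 0 := unit_ne_zero hu
  have hu'0 : u' ≠ 0 := unit_ne_zero hu'
  have hv0 : v ≠ 0 := unit_ne_zero hv
  have hv'0 : v' ≠ 0 := unit_ne_zero hv'
  obtain ⟨i₀, hi₀⟩ := exists_diag_ne_zero hAtr
  obtain ⟨j₀, hj₀⟩ := exists_diag_ne_zero hBtr
  obtain ⟨α, β, hαβ⟩ := H (Pi.single i₀ 1) (Pi.single j₀ 1)
  rcases prod_span hu0 hv0 xu hxu0 hxu1 xv hxv0 hxv1 hαβ with hcase | hcase
  · exact Or.inl (rigidity_core hA hAtr hB hBtr hu0 hu'0 hv0 hv'0 hu hv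
      xu hxu0 hxu1 xv hxv0 hxv1 H hi₀ hj₀ hcase)
  · right
    have H' : ∀ a b, ∃ α β : ℂ, tvec (A *ᵥ a) (B *ᵥ b) = α • tvec u' v' + β • tvec u v := by
      intro a b
      obtain ⟨α, β, h⟩ := H a b
      exact ⟨β, α, by rw [h, add_comm]⟩
    exact rigidity_core hA hAtr hB hBtr hu'0 hu0 hv'0 hv0 hu' hv'
      xu' hxu'0 hxu'1 xv' hxv'0 hxv'1 H' hi₀ hj₀ hcase

lemma vecState_kron (u : ι → ℂ) (v : κ → ℂ) :
    vecState u ⊗ₖ vecState v = vecState (tvec u v) := by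
  ext ⟨i, j⟩ ⟨k, l⟩
  simp only [Matrix.kroneckerMap_apply, vecState, Matrix.of_apply, tvec, _root_.map_mul]
  ring

lemma tvec_dot (a c : ι → ℂ) (b d : κ → ℂ) :
    tvec a b ⬝ᵥ tvec c d = (a ⬝ᵥ c) * (b ⬝ᵥ d) := by
  simp only [dotProduct, tvec, Fintype.sum_prod_type, Finset.sum_mul_sum]
  refine Finset.sum_congr rfl fun i _ => Finset.sum_congr rfl fun j _ => by ring

lemma star_tvec (a : ι → ℂ) (b : κ → ℂ) : star (tvec a b) = tvec (star a) (star b) := by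
  funext p
  simp [tvec, Complex.star_def]

lemma tvec_unit {u : ι → ℂ} {v : κ → ℂ} (hu : star u ⬝ᵥ u = 1) (hv : star v ⬝ᵥ v = 1) :
    star (tvec u v) ⬝ᵥ tvec u v = 1 := by
  rw [star_tvec, tvec_dot, hu, hv, mul_one]

lemma kron_mulVec_tvec (A : Matrix ι ι ℂ) (B : Matrix κ κ ℂ) (a : ι → ℂ) (b : κ → ℂ) :
    (A ⊗ₖ B) *ᵥ tvec a b = tvec (A *ᵥ a) (B *ᵥ b) := by
  funext ⟨i, j⟩
  simp only [Matrix.mulVec, dotProduct, tvec, Matrix.kroneckerMap_apply,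
    Fintype.sum_prod_type, Finset.sum_mul_sum]
  refine Finset.sum_congr rfl fun k _ => Finset.sum_congr rfl fun l _ => by ring

lemma conjTranspose_kron (A : Matrix ι ι ℂ) (B : Matrix κ κ ℂ) :
    (A ⊗ₖ B)ᴴ = Aᴴ ⊗ₖ Bᴴ := by
  ext ⟨i, j⟩ ⟨k, l⟩
  simp only [Matrix.conjTranspose_apply, Matrix.kroneckerMap_apply, Complex.star_def,
    _root_.map_mul]

lemma psd_kron {A : Matrix ι ι ℂ} {B : Matrix κ κ ℂ} (hA : A.PosSemidef) (hB : B.PosSemidef) :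
    (A ⊗ₖ B).PosSemidef := by
  exact hA.kronecker hB

lemma real_smul_matrix (r : ℝ) (A : Matrix ι ι ℂ) : r • A = (r : ℂ) • A := by
  ext i j
  simp [Complex.real_smul]

lemma psd_smul_real {A : Matrix ι ι ℂ} (hA : A.PosSemidef) {r : ℝ} (hr : 0 ≤ r) :
    (r • A).PosSemidef := by
  rw [real_smul_matrix]
  refine Matrix.PosSemidef.of_dotProduct_mulVec_nonneg ?_ ?_
  · show ((r : ℂ) • A)ᴴ = (r : ℂ) • A
    rw [Matrix.conjTranspose_smul, Complex.star_def, Complex.conj_ofReal, hA.1.eq]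
  · intro x
    rw [Matrix.smul_mulVec, dotProduct_smul]
    exact smul_nonneg (by exact_mod_cast Complex.zero_le_real.mpr hr) (hA.dotProduct_mulVec_nonneg x)

lemma dot_sum {r : Type*} [Fintype r] (x : ι → ℂ) (g : r → (ι → ℂ)) :
    x ⬝ᵥ (∑ t, g t) = ∑ t, x ⬝ᵥ g t := by
  simp only [dotProduct, Finset.sum_apply, Finset.mul_sum]
  exact Finset.sum_comm

lemma sum_mulVec {r : Type*} [Fintype r] (f : r → Matrix ι ι ℂ) (x : ι → ℂ) :
    (∑ t, f t) *ᵥ x = ∑ t, f t *ᵥ x := by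
  funext i
  simp only [Matrix.mulVec, dotProduct, Finset.sum_apply, Matrix.sum_apply,
    Finset.sum_mul]
  exact Finset.sum_comm

lemma posSemidef_sum {r : Type*} [Fintype r] {f : r → Matrix ι ι ℂ}
    (hf : ∀ t, (f t).PosSemidef) : (∑ t, f t).PosSemidef := by
  refine Matrix.PosSemidef.of_dotProduct_mulVec_nonneg ?_ ?_
  · show (∑ t, f t)ᴴ = ∑ t, f t
    rw [Matrix.conjTranspose_sum]
    exact Finset.sum_congr rfl fun t _ => (hf t).1.eq
  · intro x
    rw [sum_mulVec, dot_sum]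
    exact Finset.sum_nonneg fun t _ => (hf t).dotProduct_mulVec_nonneg x

lemma kill_sum {r : Type*} [Fintype r] {f : r → Matrix ι ι ℂ}
    (hf : ∀ t, (f t).PosSemidef) (x : ι → ℂ) (h : (∑ t, f t) *ᵥ x = 0) :
    ∀ t, f t *ᵥ x = 0 := by
  have hsum : ∑ t, star x ⬝ᵥ (f t *ᵥ x) = 0 := by
    rw [← dot_sum, ← sum_mulVec, h, dotProduct_zero]
  have hterm : ∀ t ∈ Finset.univ, star x ⬝ᵥ (f t *ᵥ x) = 0 :=
    (Finset.sum_eq_zero_iff_of_nonneg (fun t _ => (hf t).dotProduct_mulVec_nonneg x)).mp hsum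
  intro t
  exact ((hf t).dotProduct_mulVec_zero_iff x).mp (hterm t (Finset.mem_univ t))

lemma kill_two {A B : Matrix ι ι ℂ} (hA : A.PosSemidef) (hB : B.PosSemidef) (x : ι → ℂ)
    (h : (A + B) *ᵥ x = 0) : A *ᵥ x = 0 ∧ B *ᵥ x = 0 := by
  have hsum : star x ⬝ᵥ (A *ᵥ x) + star x ⬝ᵥ (B *ᵥ x) = 0 := by
    rw [← dotProduct_add, ← Matrix.add_mulVec, h, dotProduct_zero]
  obtain ⟨h1, h2⟩ := (add_eq_zero_iff_of_nonneg (hA.dotProduct_mulVec_nonneg x) (hB.dotProduct_mulVec_nonneg x)).mp hsum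
  exact ⟨(hA.dotProduct_mulVec_zero_iff x).mp h1, (hB.dotProduct_mulVec_zero_iff x).mp h2⟩

lemma sep_posSemidef {m n : ℕ} {z : Matrix (Fin m × Fin n) (Fin m × Fin n) ℂ}
    (hz : z ∈ sepSet m n) : z.PosSemidef := by
  obtain ⟨r, lam, σ, τ, hlam, _, hσ, hτ, rfl⟩ := hz
  exact posSemidef_sum fun t => psd_smul_real (psd_kron (hσ t).1 (hτ t).1) (hlam t)

lemma pure_mem_stateSet {ρ : Matrix ι ι ℂ} (h : IsPureState ρ) : ρ ∈ stateSet ι := by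
  obtain ⟨x, hx, rfl⟩ := h
  exact ⟨vecState_posSemidef x.ofLp, by
    show (vecState x.ofLp).trace = 1
    rw [vecState_trace, ← norm_one_iff_dot]; exact hx⟩

lemma kron_mem_sepSet {m n : ℕ} {σ : Matrix (Fin m) (Fin m) ℂ} {τ : Matrix (Fin n) (Fin n) ℂ}
    (hσ : σ ∈ stateSet (Fin m)) (hτ : τ ∈ stateSet (Fin n)) : σ ⊗ₖ τ ∈ sepSet m n := by
  refine ⟨1, fun _ => 1, fun _ => σ, fun _ => τ, fun _ => zero_le_one, by simp,
    fun _ => hσ, fun _ => hτ, by simp⟩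

lemma combo_mem_sepSet {m n : ℕ} {ω₁ ω₂ : Matrix (Fin m) (Fin m) ℂ}
    {σ : Matrix (Fin n) (Fin n) ℂ} (hω₁ : ω₁ ∈ stateSet (Fin m)) (hω₂ : ω₂ ∈ stateSet (Fin m))
    (hσ : σ ∈ stateSet (Fin n)) {s : ℝ} (h0 : 0 ≤ s) (h1 : s ≤ 1) :
    s • (ω₁ ⊗ₖ σ) + (1 - s) • (ω₂ ⊗ₖ σ) ∈ sepSet m n := by
  refine ⟨2, ![s, 1 - s], ![ω₁, ω₂], ![σ, σ], ?_, ?_, ?_, ?_, ?_⟩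
  · intro i
    fin_cases i
    · exact h0
    · simpa using h1
  · simp [Fin.sum_univ_two]
  · intro i; fin_cases i <;> assumption
  · intro i; fin_cases i <;> assumption
  · simp [Fin.sum_univ_two]


/-- Unique decomposition: if an equal-weights mixture of two separable states is the
equal-weights mixture of two "independent" pure product states, then each of the two
separable states is a convex combination of those two pure product states. -/
lemma decomp_unique {p q : ℕ} {u u' : Fin p → ℂ} {v v' : Fin q → ℂ}
    (hu : star u ⬝ᵥ u = 1) (hu' : star u' ⬝ᵥ u' = 1)
    (hv : star v ⬝ᵥ v = 1) (hv' : star v' ⬝ᵥ v' = 1)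
    (huu' : vecState u ≠ vecState u') (hvv' : vecState v ≠ vecState v')
    {z z' : Matrix (Fin p × Fin q) (Fin p × Fin q) ℂ}
    (hz : z ∈ sepSet p q) (hz' : z' ∈ sepSet p q)
    (heq : (2⁻¹ : ℝ) • z + (2⁻¹ : ℝ) • z' =
      (2⁻¹ : ℝ) • (vecState u ⊗ₖ vecState v) + (2⁻¹ : ℝ) • (vecState u' ⊗ₖ vecState v')) :
    ∃ s : ℝ, 0 ≤ s ∧ s ≤ 1 ∧
      z = s • (vecState u ⊗ₖ vecState v) + (1 - s) • (vecState u' ⊗ₖ vecState v') := by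
  classical
  set W : Matrix (Fin p × Fin q) (Fin p × Fin q) ℂ := vecState u ⊗ₖ vecState v with hWdef
  set W' : Matrix (Fin p × Fin q) (Fin p × Fin q) ℂ := vecState u' ⊗ₖ vecState v' with hW'def
  set w : Fin p × Fin q → ℂ := tvec u v with hwdef
  set w' : Fin p × Fin q → ℂ := tvec u' v' with hw'def
  have hWw : W = vecState w := by rw [hWdef, hwdef, vecState_kron]
  have hW'w : W' = vecState w' := by rw [hW'def, hw'def, vecState_kron]
  have hwunit : star w ⬝ᵥ w = 1 := by rw [hwdef]; exact tvec_unit hu hv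
  -- the kernel property for z
  have hzker : ∀ x, star w ⬝ᵥ x = 0 → star w' ⬝ᵥ x = 0 → z *ᵥ x = 0 := by
    intro x hx1 hx2
    have hY : ((2⁻¹ : ℝ) • z + (2⁻¹ : ℝ) • z') *ᵥ x = 0 := by
      rw [heq]
      rw [Matrix.add_mulVec, Matrix.smul_mulVec, Matrix.smul_mulVec, hWw, hW'w,
        vecState_mulVec, vecState_mulVec, hx1, hx2, zero_smul, zero_smul]
      simp
    have h2 := kill_two (psd_smul_real (sep_posSemidef hz) (by norm_num))
      (psd_smul_real (sep_posSemidef hz') (by norm_num)) x hY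
    have h3 : (2⁻¹ : ℝ) • (z *ᵥ x) = 0 := by
      rw [← Matrix.smul_mulVec]
      exact h2.1
    rcases smul_eq_zero.mp h3 with h | h
    · norm_num at h
    · exact h
  obtain ⟨r, lam, σs, τs, hlam0, hlamsum, hσ, hτ, hzdec⟩ := hz
  -- each product state in the decomposition of z is W or W'
  have key : ∀ t, lam t = 0 ∨ σs t ⊗ₖ τs t = W ∨ σs t ⊗ₖ τs t = W' := by
    intro t
    by_cases hlt : lam t = 0
    · exact Or.inl hlt
    right
    have hMker : ∀ x, star w ⬝ᵥ x = 0 → star w' ⬝ᵥ x = 0 → (σs t ⊗ₖ τs t) *ᵥ x = 0 := by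
      intro x hx1 hx2
      have hzx : (∑ i, lam i • (σs i ⊗ₖ τs i)) *ᵥ x = 0 := by
        rw [← hzdec]
        exact hzker x hx1 hx2
      have := kill_sum (fun i => psd_smul_real (psd_kron (hσ i).1 (hτ i).1) (hlam0 i)) x hzx t
      have h3 : lam t • ((σs t ⊗ₖ τs t) *ᵥ x) = 0 := by
        rw [← Matrix.smul_mulVec]
        exact this
      rcases smul_eq_zero.mp h3 with h | h
      · exact absurd h hlt
      · exact h
    have hherm : (σs t ⊗ₖ τs t).IsHermitian := (psd_kron (hσ t).1 (hτ t).1).1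
    obtain ⟨xu, hxu0, hxu1⟩ := exists_dual hu hu' huu'
    obtain ⟨xu', hxu'0, hxu'1⟩ := exists_dual hu' hu huu'.symm
    obtain ⟨xv, hxv0, hxv1⟩ := exists_dual hv hv' hvv'
    obtain ⟨xv', hxv'0, hxv'1⟩ := exists_dual hv' hv hvv'.symm
    have H : ∀ a b, ∃ α β : ℂ, tvec (σs t *ᵥ a) (τs t *ᵥ b) = α • tvec u v + β • tvec u' v' := by
      intro a b
      obtain ⟨α, β, hy⟩ := herm_range hherm hwunit hMker (tvec a b)
      rw [kron_mulVec_tvec] at hy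
      exact ⟨α, β, by rw [hy, hwdef, hw'def]⟩
    rcases rigidity (hσ t).1.1 (hσ t).2 (hτ t).1.1 (hτ t).2 hu hu' hv hv'
        xu hxu0 hxu1 xu' hxu'0 hxu'1 xv hxv0 hxv1 xv' hxv'0 hxv'1 H with ⟨hσe, hτe⟩ | ⟨hσe, hτe⟩
    · exact Or.inl (by rw [hσe, hτe, hWdef])
    · exact Or.inr (by rw [hσe, hτe, hW'def])
  -- reconstruct z
  set S : Finset (Fin r) := Finset.univ.filter (fun t => σs t ⊗ₖ τs t = W) with hSdef
  refine ⟨∑ t ∈ S, lam t, Finset.sum_nonneg fun t _ => hlam0 t, ?_, ?_⟩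
  · have h1 : (∑ t ∈ S, lam t) + ∑ t ∈ Finset.univ.filter (fun t => ¬(σs t ⊗ₖ τs t = W)), lam t
        = 1 := by
      rw [hSdef, Finset.sum_filter_add_sum_filter_not]
      exact hlamsum
    have h2 : 0 ≤ ∑ t ∈ Finset.univ.filter (fun t => ¬(σs t ⊗ₖ τs t = W)), lam t :=
      Finset.sum_nonneg fun t _ => hlam0 t
    linarith
  · have hsplit : z = (∑ t ∈ S, lam t • (σs t ⊗ₖ τs t))
        + ∑ t ∈ Finset.univ.filter (fun t => ¬(σs t ⊗ₖ τs t = W)), lam t • (σs t ⊗ₖ τs t) := by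
      rw [hzdec, hSdef, Finset.sum_filter_add_sum_filter_not]
    have hS1 : (∑ t ∈ S, lam t • (σs t ⊗ₖ τs t)) = (∑ t ∈ S, lam t) • W := by
      rw [Finset.sum_smul]
      refine Finset.sum_congr rfl fun t ht => ?_
      rw [(Finset.mem_filter.mp ht).2]
    have hS2 : (∑ t ∈ Finset.univ.filter (fun t => ¬(σs t ⊗ₖ τs t = W)), lam t • (σs t ⊗ₖ τs t))
        = (∑ t ∈ Finset.univ.filter (fun t => ¬(σs t ⊗ₖ τs t = W)), lam t) • W' := by
      rw [Finset.sum_smul]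
      refine Finset.sum_congr rfl fun t ht => ?_
      rcases key t with h | h | h
      · rw [h, zero_smul, zero_smul]
      · exact absurd h (Finset.mem_filter.mp ht).2
      · rw [h]
    have h1 : (∑ t ∈ Finset.univ.filter (fun t => ¬(σs t ⊗ₖ τs t = W)), lam t)
        = 1 - ∑ t ∈ S, lam t := by
      have := Finset.sum_filter_add_sum_filter_not Finset.univ (fun t => σs t ⊗ₖ τs t = W) lam
      rw [hlamsum] at this
      rw [hSdef]
      linarith
    rw [hsplit, hS1, hS2, h1]

lemma kron_partial_left {p q : ℕ} {A B : Matrix (Fin p) (Fin p) ℂ}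
    {C D : Matrix (Fin q) (Fin q) ℂ} (hC : C.trace = 1) (hD : D.trace = 1)
    (h : A ⊗ₖ C = B ⊗ₖ D) : A = B := by
  ext i k
  have h1 : ∀ j, A i k * C j j = B i k * D j j := fun j => congrFun (congrFun h (i, j)) (k, j)
  have h2 : A i k * C.trace = B i k * D.trace := by
    simp only [Matrix.trace, Matrix.diag, Finset.mul_sum]
    exact Finset.sum_congr rfl fun j _ => h1 j
  rwa [hC, hD, mul_one, mul_one] at h2

lemma kron_partial_right {p q : ℕ} {A B : Matrix (Fin p) (Fin p) ℂ}
    {C D : Matrix (Fin q) (Fin q) ℂ} (hA : A.trace = 1) (hB : B.trace = 1)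
    (h : A ⊗ₖ C = B ⊗ₖ D) : C = D := by
  ext j l
  have h1 : ∀ i, A i i * C j l = B i i * D j l := fun i => congrFun (congrFun h (i, j)) (i, l)
  have h2 : A.trace * C j l = B.trace * D j l := by
    simp only [Matrix.trace, Matrix.diag, Finset.sum_mul]
    exact Finset.sum_congr rfl fun i _ => h1 i
  rwa [hA, hB, one_mul, one_mul] at h2

/-- The segment lemma: if `Φ` sends `ωa ⊗ σ, ωb ⊗ σ` (`ωa ≠ ωb` pure, `σ` pure) to
`ρa ⊗ τa, ρb ⊗ τb` with `ρa ≠ ρb` and `τa ≠ τb` (all pure), we get a contradiction. -/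
lemma seg {m n m' n' : ℕ}
    (Φ : Matrix (Fin m × Fin n) (Fin m × Fin n) ℂ →
      Matrix (Fin m' × Fin n') (Fin m' × Fin n') ℂ)
    (hΦ : AffBijOn Φ (sepSet m n) (sepSet m' n'))
    {ωa ωb : Matrix (Fin m) (Fin m) ℂ} {σ : Matrix (Fin n) (Fin n) ℂ}
    (hωa : IsPureState ωa) (hωb : IsPureState ωb) (hωne : ωa ≠ ωb) (hσp : IsPureState σ)
    {ρa ρb : Matrix (Fin m') (Fin m') ℂ} {τa τb : Matrix (Fin n') (Fin n') ℂ}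
    (hρa : IsPureState ρa) (hρb : IsPureState ρb) (hτa : IsPureState τa) (hτb : IsPureState τb)
    (h1 : Φ (ωa ⊗ₖ σ) = ρa ⊗ₖ τa) (h2 : Φ (ωb ⊗ₖ σ) = ρb ⊗ₖ τb)
    (hρne : ρa ≠ ρb) (hτne : τa ≠ τb) : False := by
  classical
  obtain ⟨u₁e, hu₁n, hωae⟩ := hωa
  obtain ⟨u₂e, hu₂n, hωbe⟩ := hωb
  replace hωae : ωa = vecState u₁e.ofLp := hωae
  replace hωbe : ωb = vecState u₂e.ofLp := hωbe
  set u₁ : Fin m → ℂ := u₁e.ofLp with hu₁def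
  set u₂ : Fin m → ℂ := u₂e.ofLp with hu₂def
  have hu₁ : star u₁ ⬝ᵥ u₁ = 1 := (norm_one_iff_dot u₁e).mp hu₁n
  have hu₂ : star u₂ ⬝ᵥ u₂ = 1 := (norm_one_iff_dot u₂e).mp hu₂n
  -- phase adjustment
  set c : ℂ := star u₁ ⬝ᵥ u₂ with hcdef
  set e : ℂ := if c = 0 then 1 else Complex.I * conj' c / ‖c‖ with hedef
  have hee : conj' e * e = 1 := by
    rw [hedef]
    by_cases h0 : c = 0
    · rw [if_pos h0]; simp
    · rw [if_neg h0, ← Complex.normSq_eq_conj_mul_self]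
      have habsR : ‖c‖ ≠ 0 := norm_ne_zero_iff.mpr h0
      norm_cast
      rw [Complex.normSq_div, Complex.normSq_mul, Complex.normSq_I, Complex.normSq_conj,
        Complex.normSq_ofReal, one_mul, ← Complex.sq_norm, pow_two]
      exact div_self (mul_ne_zero habsR habsR)
  set u₂' : Fin m → ℂ := e • u₂ with hu₂'def
  have hu₂'norm : star u₂' ⬝ᵥ u₂' = 1 := by
    rw [hu₂'def, star_smul, smul_dotProduct, dotProduct_smul, smul_eq_mul,
      smul_eq_mul, Complex.star_def, hu₂]
    rw [mul_one, hee]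
  have hvs2 : vecState u₂' = vecState u₂ := vecState_eq_of_smul hu₂'norm hu₂ hu₂'def
  set c' : ℂ := star u₁ ⬝ᵥ u₂' with hc'def
  have hc'skew : c' + conj' c' = 0 := by
    have hc'e : c' = e * c := by
      rw [hc'def, hu₂'def, dotProduct_smul, smul_eq_mul, hcdef]
    rw [hc'e, hedef]
    by_cases h0 : c = 0
    · rw [h0]; simp
    · rw [if_neg h0]
      have hconj : conj' (Complex.I * conj' c / (‖c‖ : ℂ) * c)
          = -(Complex.I * conj' c / (‖c‖ : ℂ) * c) := by
        rw [_root_.map_mul, map_div₀, _root_.map_mul, Complex.conj_I, Complex.conj_conj,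
          Complex.conj_ofReal]
        ring
      rw [hconj]
      ring
  -- the two auxiliary unit vectors
  set r : ℂ := ((Real.sqrt 2 : ℝ) : ℂ)⁻¹ with hrdef
  have hsq2 : ((Real.sqrt 2 : ℝ) : ℂ) * ((Real.sqrt 2 : ℝ) : ℂ) = 2 := by
    norm_cast
    exact Real.mul_self_sqrt (by norm_num)
  have hrr : conj' r * r = 2⁻¹ := by
    rw [hrdef, map_inv₀, Complex.conj_ofReal, ← mul_inv, hsq2]
  have hrne : r ≠ 0 := by
    rw [hrdef]
    apply inv_ne_zero
    intro hz
    rw [hz, mul_zero] at hsq2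
    norm_num at hsq2
  set gp : Fin m → ℂ := r • (u₁ + u₂') with hgpdef
  set gm : Fin m → ℂ := r • (u₁ - u₂') with hgmdef
  have hdots : star u₂' ⬝ᵥ u₁ = conj' c' := by rw [hc'def, ← star_dot_comm]
  have hgp : star gp ⬝ᵥ gp = 1 := by
    rw [hgpdef, star_smul, smul_dotProduct, dotProduct_smul, smul_eq_mul,
      smul_eq_mul, Complex.star_def, star_add, add_dotProduct, dotProduct_add,
      dotProduct_add, hu₁, ← hc'def, hdots, hu₂'norm]
    linear_combination (2 + c' + conj' c') * hrr + (2:ℂ)⁻¹ * hc'skew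
  have hgm : star gm ⬝ᵥ gm = 1 := by
    rw [hgmdef, star_smul, smul_dotProduct, dotProduct_smul, smul_eq_mul,
      smul_eq_mul, Complex.star_def, star_sub, sub_dotProduct, dotProduct_sub,
      dotProduct_sub, hu₁, ← hc'def, hdots, hu₂'norm]
    linear_combination (2 - c' - conj' c') * hrr - (2:ℂ)⁻¹ * hc'skew
  -- key identity
  have hkey : (2⁻¹ : ℝ) • vecState gp + (2⁻¹ : ℝ) • vecState gm
      = (2⁻¹ : ℝ) • ωa + (2⁻¹ : ℝ) • ωb := by
    rw [hωae, hωbe, ← hvs2]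
    ext i j
    simp only [Matrix.add_apply, Matrix.smul_apply, vecState, Matrix.of_apply, hgpdef, hgmdef,
      Pi.smul_apply, Pi.add_apply, Pi.sub_apply, smul_eq_mul, _root_.map_mul, map_add, map_sub,
      Complex.real_smul]
    push_cast
    linear_combination (u₁ i * conj' (u₁ j) + u₂' i * conj' (u₂' j)) * hrr
  -- memberships
  have hstσ : σ ∈ stateSet (Fin n) := pure_mem_stateSet hσp
  have hstωa : ωa ∈ stateSet (Fin m) := pure_mem_stateSet ⟨u₁e, hu₁n, hωae⟩
  have hstωb : ωb ∈ stateSet (Fin m) := pure_mem_stateSet ⟨u₂e, hu₂n, hωbe⟩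
  have hstgp : vecState gp ∈ stateSet (Fin m) :=
    ⟨vecState_posSemidef _, by rw [vecState_trace]; exact hgp⟩
  have hstgm : vecState gm ∈ stateSet (Fin m) :=
    ⟨vecState_posSemidef _, by rw [vecState_trace]; exact hgm⟩
  -- equality of the two mixtures
  have hargeq : (2⁻¹ : ℝ) • (vecState gp ⊗ₖ σ) + (2⁻¹ : ℝ) • (vecState gm ⊗ₖ σ)
      = (2⁻¹ : ℝ) • (ωa ⊗ₖ σ) + (2⁻¹ : ℝ) • (ωb ⊗ₖ σ) := by
    rw [← Matrix.smul_kronecker, ← Matrix.smul_kronecker, ← Matrix.add_kronecker, hkey,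
      Matrix.add_kronecker, Matrix.smul_kronecker, Matrix.smul_kronecker]
  have h12 : (1 : ℝ) - 2⁻¹ = 2⁻¹ := by norm_num
  have haff1 := hΦ.2 (vecState gp ⊗ₖ σ) (kron_mem_sepSet hstgp hstσ)
    (vecState gm ⊗ₖ σ) (kron_mem_sepSet hstgm hstσ) 2⁻¹ (by norm_num) (by norm_num)
  have haff2 := hΦ.2 (ωa ⊗ₖ σ) (kron_mem_sepSet hstωa hstσ)
    (ωb ⊗ₖ σ) (kron_mem_sepSet hstωb hstσ) 2⁻¹ (by norm_num) (by norm_num)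
  rw [h12] at haff1 haff2
  have heq2 : (2⁻¹ : ℝ) • Φ (vecState gp ⊗ₖ σ) + (2⁻¹ : ℝ) • Φ (vecState gm ⊗ₖ σ)
      = (2⁻¹ : ℝ) • (ρa ⊗ₖ τa) + (2⁻¹ : ℝ) • (ρb ⊗ₖ τb) := by
    rw [← haff1, hargeq, haff2, h1, h2]
  -- pure-state data on the target side
  obtain ⟨uae, huan, hρae⟩ := hρa
  obtain ⟨ube, hubn, hρbe⟩ := hρb
  obtain ⟨vae, hvan, hτae⟩ := hτa
  obtain ⟨vbe, hvbn, hτbe⟩ := hτb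
  replace hρae : ρa = vecState uae.ofLp := hρae
  replace hρbe : ρb = vecState ube.ofLp := hρbe
  replace hτae : τa = vecState vae.ofLp := hτae
  replace hτbe : τb = vecState vbe.ofLp := hτbe
  have hua : star (uae : Fin m' → ℂ) ⬝ᵥ uae = 1 := (norm_one_iff_dot uae).mp huan
  have hub : star (ube : Fin m' → ℂ) ⬝ᵥ ube = 1 := (norm_one_iff_dot ube).mp hubn
  have hva : star (vae : Fin n' → ℂ) ⬝ᵥ vae = 1 := (norm_one_iff_dot vae).mp hvan
  have hvb : star (vbe : Fin n' → ℂ) ⬝ᵥ vbe = 1 := (norm_one_iff_dot vbe).mp hvbn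
  have huu' : vecState uae ≠ vecState ube := by rw [← hρae, ← hρbe]; exact hρne
  have hvv' : vecState vae ≠ vecState vbe := by rw [← hτae, ← hτbe]; exact hτne
  have hzmem : Φ (vecState gp ⊗ₖ σ) ∈ sepSet m' n' :=
    hΦ.1.1 (kron_mem_sepSet hstgp hstσ)
  have hz'mem : Φ (vecState gm ⊗ₖ σ) ∈ sepSet m' n' :=
    hΦ.1.1 (kron_mem_sepSet hstgm hstσ)
  have heq3 : (2⁻¹ : ℝ) • Φ (vecState gp ⊗ₖ σ) + (2⁻¹ : ℝ) • Φ (vecState gm ⊗ₖ σ)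
      = (2⁻¹ : ℝ) • (vecState uae ⊗ₖ vecState vae)
        + (2⁻¹ : ℝ) • (vecState ube ⊗ₖ vecState vbe) := by
    rw [heq2, hρae, hρbe, hτae, hτbe]
  obtain ⟨s, hs0, hs1, hzs⟩ := decomp_unique hua hub hva hvb huu' hvv' hzmem hz'mem heq3
  -- transport back through Φ
  have haff3 := hΦ.2 (ωa ⊗ₖ σ) (kron_mem_sepSet hstωa hstσ)
    (ωb ⊗ₖ σ) (kron_mem_sepSet hstωb hstσ) s hs0 hs1
  have hPhieq : Φ (vecState gp ⊗ₖ σ) = Φ (s • (ωa ⊗ₖ σ) + (1 - s) • (ωb ⊗ₖ σ)) := by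
    rw [haff3, h1, h2, hzs, hρae, hρbe, hτae, hτbe]
  have hxy : vecState gp ⊗ₖ σ = s • (ωa ⊗ₖ σ) + (1 - s) • (ωb ⊗ₖ σ) :=
    hΦ.1.2.1 (kron_mem_sepSet hstgp hstσ) (combo_mem_sepSet hstωa hstωb hstσ hs0 hs1) hPhieq
  -- cancel σ
  obtain ⟨j₀, hj₀⟩ := exists_diag_ne_zero hstσ.2
  have hcomb : vecState gp = s • vecState u₁ + (1 - s) • vecState u₂' := by
    rw [← hvs2] at hωbe
    ext i k
    have hpt := congrFun (congrFun hxy (i, j₀)) (k, j₀)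
    simp only [Matrix.add_apply, Matrix.smul_apply, Matrix.kroneckerMap_apply,
      Complex.real_smul, hωae, hωbe, ← hu₁def] at hpt
    simp only [Matrix.add_apply, Matrix.smul_apply, Complex.real_smul]
    apply mul_right_cancel₀ hj₀
    rw [hpt]
    ring
  -- final contradiction
  have hgp0 : gp ≠ 0 := unit_ne_zero hgp
  have hsum : u₁ + u₂' = r⁻¹ • gp := by
    rw [hgpdef, smul_smul, inv_mul_cancel₀ hrne, one_smul]
  have hωagp : ∀ k : ℂ, u₁ = k • gp → False := by
    intro k hk
    have hωag : ωa = vecState gp := by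
      rw [hωae]
      exact vecState_eq_of_smul hu₁ hgp hk
    have hu₂'g : u₂' = (r⁻¹ - k) • gp := by
      have : u₂' = r⁻¹ • gp - u₁ := by
        rw [← hsum]; abel
      rw [this, hk, sub_smul]
    have hωbg : ωb = vecState gp := by
      rw [hωbe, ← hvs2]
      exact vecState_eq_of_smul hu₂'norm hgp hu₂'g
    exact hωne (hωag.trans hωbg.symm)
  by_cases hs : s = 0
  · -- vecState gp = vecState u₂'
    rw [hs] at hcomb
    simp only [zero_smul, sub_zero, one_smul, zero_add] at hcomb
    obtain ⟨k, hk⟩ := vecState_inj u₂' gp hgp0 (hcomb.symm)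
    have hu₁g : u₁ = (r⁻¹ - k) • gp := by
      have : u₁ = r⁻¹ • gp - u₂' := by rw [← hsum]; abel
      rw [this, hk, sub_smul]
    exact hωagp _ hu₁g
  · -- s ≠ 0 : the dual vector argument
    have hne12 : vecState u₁ ≠ vecState u₂' := by
      rw [hvs2, ← hωae, ← hωbe]
      exact hωne
    obtain ⟨x, hx0, hx1⟩ := exists_dual hu₁ hu₂'norm hne12
    have hmv := congrArg (fun M => M *ᵥ x) hcomb
    simp only [Matrix.add_mulVec, Matrix.smul_mulVec, vecState_mulVec, hx0, hx1,
      zero_smul, smul_zero, add_zero] at hmv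
    -- hmv : (star gp ⬝ᵥ x) • gp = s • ((star u₁ ⬝ᵥ x) • u₁)
    have hmv2 : ((s : ℂ) * (star u₁ ⬝ᵥ x)) • u₁ = (star gp ⬝ᵥ x) • gp := by
      rw [hmv]
      funext i
      simp only [Pi.smul_apply, smul_eq_mul, Complex.real_smul]
      ring
    have hsc : (s : ℂ) * (star u₁ ⬝ᵥ x) ≠ 0 :=
      mul_ne_zero (by exact_mod_cast hs) hx1
    have hu₁g : u₁ = (((s : ℂ) * (star u₁ ⬝ᵥ x))⁻¹ * (star gp ⬝ᵥ x)) • gp := by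
      funext i
      have := congrFun hmv2 i
      simp only [Pi.smul_apply, smul_eq_mul] at this ⊢
      field_simp
      linear_combination this
    exact hωagp _ hu₁g

end FourEqAux

/-- For an affine isomorphism `Φ : S_{m,n} → S_{m',n'}`, the four displayed equations on
products of pure states cannot hold simultaneously. -/
theorem four_equations_impossible {m n m' n' : ℕ}
    (Φ : Matrix (Fin m × Fin n) (Fin m × Fin n) ℂ →
      Matrix (Fin m' × Fin n') (Fin m' × Fin n') ℂ)
    (hΦ : AffBijOn Φ (sepSet m n) (sepSet m' n'))
    (ω₁ ω₂ : Matrix (Fin m) (Fin m) ℂ) (hω₁ : IsPureState ω₁) (hω₂ : IsPureState ω₂)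
    (hω : ω₁ ≠ ω₂)
    (σ₁ σ₂ : Matrix (Fin n) (Fin n) ℂ) (hσ₁ : IsPureState σ₁) (hσ₂ : IsPureState σ₂)
    (hσ : σ₁ ≠ σ₂)
    (ρ₁ ρ₂ ρ₃ : Matrix (Fin m') (Fin m') ℂ)
    (hρ₁ : IsPureState ρ₁) (hρ₂ : IsPureState ρ₂) (hρ₃ : IsPureState ρ₃)
    (τ₁ τ₂ τ₃ : Matrix (Fin n') (Fin n') ℂ)
    (hτ₁ : IsPureState τ₁) (hτ₂ : IsPureState τ₂) (hτ₃ : IsPureState τ₃) :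
    ¬ (Φ (ω₁ ⊗ₖ σ₁) = ρ₁ ⊗ₖ τ₁ ∧ Φ (ω₁ ⊗ₖ σ₂) = ρ₁ ⊗ₖ τ₂ ∧
       Φ (ω₂ ⊗ₖ σ₁) = ρ₂ ⊗ₖ τ₃ ∧ Φ (ω₂ ⊗ₖ σ₂) = ρ₃ ⊗ₖ τ₃) := by
  rintro ⟨e1, e2, e3, e4⟩
  have inj := hΦ.1.2.1
  have hstσ₁ := FourEqAux.pure_mem_stateSet hσ₁
  have hstσ₂ := FourEqAux.pure_mem_stateSet hσ₂
  have hstω₁ := FourEqAux.pure_mem_stateSet hω₁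
  have hstω₂ := FourEqAux.pure_mem_stateSet hω₂
  have m11 := FourEqAux.kron_mem_sepSet hstω₁ hstσ₁
  have m12 := FourEqAux.kron_mem_sepSet hstω₁ hstσ₂
  have m21 := FourEqAux.kron_mem_sepSet hstω₂ hstσ₁
  have m22 := FourEqAux.kron_mem_sepSet hstω₂ hstσ₂
  have case1 : ρ₁ = ρ₂ ∨ τ₁ = τ₃ := by
    by_contra hcon
    push_neg at hcon
    exact FourEqAux.seg Φ hΦ hω₁ hω₂ hω hσ₁ hρ₁ hρ₂ hτ₁ hτ₃ e1 e3 hcon.1 hcon.2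
  have case2 : ρ₁ = ρ₃ ∨ τ₂ = τ₃ := by
    by_contra hcon
    push_neg at hcon
    exact FourEqAux.seg Φ hΦ hω₁ hω₂ hω hσ₂ hρ₁ hρ₃ hτ₂ hτ₃ e2 e4 hcon.1 hcon.2
  rcases case1 with hc1 | hc1 <;> rcases case2 with hc2 | hc2
  · have h23 : ρ₂ = ρ₃ := hc1.symm.trans hc2
    have hee : Φ (ω₂ ⊗ₖ σ₁) = Φ (ω₂ ⊗ₖ σ₂) := by rw [e3, e4, h23]
    have hxy := inj m21 m22 hee
    exact hσ (FourEqAux.kron_partial_right hstω₂.2 hstω₂.2 hxy)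
  · have hee : Φ (ω₁ ⊗ₖ σ₂) = Φ (ω₂ ⊗ₖ σ₁) := by rw [e2, e3, ← hc1, ← hc2]
    have hxy := inj m12 m21 hee
    exact hω (FourEqAux.kron_partial_left hstσ₂.2 hstσ₁.2 hxy)
  · have hee : Φ (ω₁ ⊗ₖ σ₁) = Φ (ω₂ ⊗ₖ σ₂) := by rw [e1, e4, ← hc2, ← hc1]
    have hxy := inj m11 m22 hee
    exact hω (FourEqAux.kron_partial_left hstσ₁.2 hstσ₂.2 hxy)
  · have h12 : τ₁ = τ₂ := hc1.trans hc2.symm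
    have hee : Φ (ω₁ ⊗ₖ σ₁) = Φ (ω₁ ⊗ₖ σ₂) := by rw [e1, e2, h12]
    have hxy := inj m11 m12 hee
    exact hσ (FourEqAux.kron_partial_right hstω₁.2 hstω₁.2 hxy)


end
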